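/- Let q = 2^m and let f be a polynomial over F_q of degree d > 3 with d not a power of 2. Then δ(f) ≤ 4 if and only if every quadruple (x, y, z, t) ∈ F_q⁴ satisfying P_f(x,y,z) = 0 and P_f(x,y,t) = 0 also satisfies (x+y)(x+z)(x+t)(y+z)(y+t)(z+t)(x+y+z+t) = 0. -/

import Mathlib

open MvPolynomial

/-- The differential uniformity of a function `f` on a field `F`:
`δ(f) = max_{α ≠ 0, β} #{x | f(x+α) + f(x) = β}`. -/
noncomputable def deltaUniformity {F : Type*} [Field F] (f : F → F) : ℕ :=
  sSup { n : ℕ | ∃ α β : F, α ≠ 0 ∧ n = Set.ncard {x : F | f (x + α) + f x = β} }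

lemma eval_polyAeval {R : Type*} [CommRing R] (f : Polynomial R)
    (v : Fin 3 → R) (g : MvPolynomial (Fin 3) R) :
    MvPolynomial.eval v (Polynomial.aeval g f) = f.eval (MvPolynomial.eval v g) := by
  rw [Polynomial.aeval_def, Polynomial.hom_eval₂]
  rw [Polynomial.eval]; congr 1; ext; simp

lemma ncard_le_diff_pair {K : Type*} [Finite K] (a b : K) (T : Set K) :
    T.ncard ≤ (T \ {a, b}).ncard + 2 := by
  have hsplit : T ⊆ (T \ {a, b}) ∪ {a, b} := by
    intro u hu
    by_cases h : u ∈ ({a, b} : Set K)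
    · exact Set.mem_union_right _ h
    · exact Set.mem_union_left _ ⟨hu, h⟩
  have hle : T.ncard ≤ (T \ {a, b}).ncard + ({a, b} : Set K).ncard :=
    le_trans (Set.ncard_le_ncard hsplit
      (Set.Finite.union (Set.toFinite _) (Set.toFinite _)))
      (Set.ncard_union_le _ _)
  have hpair : ({a, b} : Set K).ncard ≤ 2 :=
    le_trans (Set.ncard_insert_le _ _) (by simp)
  omega

/-- Geometric characterization of differentially 4-uniform polynomial functions:
`δ(f) ≤ 4` iff every `F_q`-point `(x,y,z,t)` with `P_f(x,y,z) = P_f(x,y,t) = 0` lies on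
the union of the seven hyperplanes. -/
theorem stmt_6 (m : ℕ) (f : Polynomial (GaloisField 2 m))
    (hd : 3 < f.natDegree) (hd2 : ¬∃ k : ℕ, f.natDegree = 2 ^ k)
    (P : MvPolynomial (Fin 3) (GaloisField 2 m))
    (hP : ((X 0 + X 1) * (X 0 + X 2) * (X 1 + X 2) : MvPolynomial (Fin 3) (GaloisField 2 m)) * P =
      Polynomial.aeval (X 0 : MvPolynomial (Fin 3) (GaloisField 2 m)) f +
        Polynomial.aeval (X 1 : MvPolynomial (Fin 3) (GaloisField 2 m)) f +
        Polynomial.aeval (X 2 : MvPolynomial (Fin 3) (GaloisField 2 m)) f +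
        Polynomial.aeval (X 0 + X 1 + X 2 : MvPolynomial (Fin 3) (GaloisField 2 m)) f) :
    deltaUniformity (fun x => f.eval x) ≤ 4 ↔
      ∀ x y z t : GaloisField 2 m,
        eval ![x, y, z] P = 0 → eval ![x, y, t] P = 0 →
        (x + y) * (x + z) * (x + t) * (y + z) * (y + t) * (z + t) * (x + y + z + t) = 0 := by
  classical
  have h2 : (2 : GaloisField 2 m) = 0 := CharTwo.two_eq_zero
  have addself : ∀ a : GaloisField 2 m, a + a = 0 := CharTwo.add_self_eq_zero
  have addeq : ∀ a b : GaloisField 2 m, a + b = 0 → a = b := by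
    intro a b h; linear_combination h - h2 * b
  -- the key polynomial identity, evaluated
  have key : ∀ a b c : GaloisField 2 m,
      (a + b) * (a + c) * (b + c) * (MvPolynomial.eval ![a, b, c] P) =
        f.eval a + f.eval b + f.eval c + f.eval (a + b + c) := by
    intro a b c
    have h := congrArg (MvPolynomial.eval ![a, b, c]) hP
    simp only [map_mul, map_add, MvPolynomial.eval_X, eval_polyAeval] at h
    simpa using h
  have hS : deltaUniformity (fun x => f.eval x) =
      sSup { n : ℕ | ∃ α β : GaloisField 2 m, α ≠ 0 ∧
        n = Set.ncard {x : GaloisField 2 m | f.eval (x + α) + f.eval x = β} } := rfl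
  have hBdd : BddAbove { n : ℕ | ∃ α β : GaloisField 2 m, α ≠ 0 ∧
      n = Set.ncard {x : GaloisField 2 m | f.eval (x + α) + f.eval x = β} } := by
    refine ⟨Nat.card (GaloisField 2 m), ?_⟩
    rintro n ⟨α, β, hα, rfl⟩
    calc Set.ncard {x : GaloisField 2 m | f.eval (x + α) + f.eval x = β}
        ≤ (Set.univ : Set (GaloisField 2 m)).ncard :=
          Set.ncard_le_ncard (Set.subset_univ _) Set.finite_univ
      _ = Nat.card (GaloisField 2 m) := Set.ncard_univ _
  constructor
  · -- δ ≤ 4 → geometric condition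
    intro hδ x y z t hz ht
    by_contra hne
    have hxy : x + y ≠ 0 := fun h => hne (by rw [h]; ring)
    have hxz : x + z ≠ 0 := fun h => hne (by rw [h]; ring)
    have hxt : x + t ≠ 0 := fun h => hne (by rw [h]; ring)
    have hyz : y + z ≠ 0 := fun h => hne (by rw [h]; ring)
    have hyt : y + t ≠ 0 := fun h => hne (by rw [h]; ring)
    have hzt : z + t ≠ 0 := fun h => hne (by rw [h]; ring)
    have hxyzt : x + y + z + t ≠ 0 := fun h => hne (by rw [h]; ring)
    have hsz : f.eval x + f.eval y + f.eval z + f.eval (x + y + z) = 0 := by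
      have := key x y z; rw [hz, mul_zero] at this; exact this.symm
    have hst : f.eval x + f.eval y + f.eval t + f.eval (x + y + t) = 0 := by
      have := key x y t; rw [ht, mul_zero] at this; exact this.symm
    set D : Set (GaloisField 2 m) :=
      {u : GaloisField 2 m | f.eval (u + (x + y)) + f.eval u = f.eval x + f.eval y} with hD
    -- six distinct solutions
    have mx : x ∈ D := by
      show f.eval (x + (x + y)) + f.eval x = f.eval x + f.eval y
      have h : x + (x + y) = y := by linear_combination h2 * x
      rw [h]; ring
    have my : y ∈ D := by
      show f.eval (y + (x + y)) + f.eval y = f.eval x + f.eval y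
      have h : y + (x + y) = x := by linear_combination h2 * y
      rw [h]
    have mz : z ∈ D := by
      show f.eval (z + (x + y)) + f.eval z = f.eval x + f.eval y
      have h : z + (x + y) = x + y + z := by ring
      rw [h]; linear_combination hsz - h2 * (f.eval x + f.eval y)
    have mz' : x + y + z ∈ D := by
      show f.eval (x + y + z + (x + y)) + f.eval (x + y + z) = f.eval x + f.eval y
      have h : x + y + z + (x + y) = z := by linear_combination h2 * (x + y)
      rw [h]; linear_combination hsz - h2 * (f.eval x + f.eval y)
    have mt : t ∈ D := by
      show f.eval (t + (x + y)) + f.eval t = f.eval x + f.eval y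
      have h : t + (x + y) = x + y + t := by ring
      rw [h]; linear_combination hst - h2 * (f.eval x + f.eval y)
    have mt' : x + y + t ∈ D := by
      show f.eval (x + y + t + (x + y)) + f.eval (x + y + t) = f.eval x + f.eval y
      have h : x + y + t + (x + y) = t := by linear_combination h2 * (x + y)
      rw [h]; linear_combination hst - h2 * (f.eval x + f.eval y)
    -- distinctness
    have d1 : x ≠ y := fun h => hxy (by rw [h]; exact addself y)
    have d2 : x ≠ z := fun h => hxz (by rw [h]; exact addself z)
    have d3 : x ≠ t := fun h => hxt (by rw [h]; exact addself t)
    have d4 : y ≠ z := fun h => hyz (by rw [h]; exact addself z)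
    have d5 : y ≠ t := fun h => hyt (by rw [h]; exact addself t)
    have d6 : z ≠ t := fun h => hzt (by rw [h]; exact addself t)
    have d7 : x ≠ x + y + z := fun h => hyz (by linear_combination -h)
    have d8 : x ≠ x + y + t := fun h => hyt (by linear_combination -h)
    have d9 : y ≠ x + y + z := fun h => hxz (by linear_combination -h)
    have d10 : y ≠ x + y + t := fun h => hxt (by linear_combination -h)
    have d11 : z ≠ x + y + z := fun h => hxy (by linear_combination -h)
    have d12 : t ≠ x + y + t := fun h => hxy (by linear_combination -h)
    have d13 : z ≠ x + y + t := fun h => hxyzt (by linear_combination h + h2 * (x + y + t))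
    have d14 : t ≠ x + y + z := fun h => hxyzt (by linear_combination h + h2 * (x + y + z))
    have d15 : x + y + z ≠ x + y + t := fun h => d6 (by linear_combination h)
    set s : Finset (GaloisField 2 m) := {x, y, z, x + y + z, t, x + y + t} with hs
    have hsub : (s : Set (GaloisField 2 m)) ⊆ D := by
      intro u hu
      simp only [hs, Finset.coe_insert, Set.mem_insert_iff, Finset.coe_singleton,
        Set.mem_singleton_iff] at hu
      rcases hu with h | h | h | h | h | h <;> subst h <;> assumption
    have hcard : s.card = 6 := by
      rw [hs]
      rw [Finset.card_insert_of_notMem (by simp [d1, d2, d3, d7, d8])]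
      rw [Finset.card_insert_of_notMem (by simp [d4, d5, d9, d10])]
      rw [Finset.card_insert_of_notMem (by simp [d6, d11, d13])]
      rw [Finset.card_insert_of_notMem (by
        simp only [Finset.mem_insert, Finset.mem_singleton, not_or]
        exact ⟨fun h => d14 h.symm, d15⟩)]
      rw [Finset.card_insert_of_notMem (by simp [d12])]
      simp
    have h6 : 6 ≤ D.ncard := by
      rw [← hcard, ← Set.ncard_coe_finset]
      exact Set.ncard_le_ncard hsub (Set.toFinite D)
    have hmem : D.ncard ∈ { n : ℕ | ∃ α β : GaloisField 2 m, α ≠ 0 ∧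
        n = Set.ncard {x : GaloisField 2 m | f.eval (x + α) + f.eval x = β} } :=
      ⟨x + y, f.eval x + f.eval y, hxy, rfl⟩
    have : D.ncard ≤ 4 := le_trans (le_csSup hBdd hmem) (by rw [← hS]; exact hδ)
    omega
  · -- geometric condition → δ ≤ 4
    intro hgeo
    rw [hS]
    refine csSup_le ⟨Set.ncard {x : GaloisField 2 m | f.eval (x + 1) + f.eval x = 0},
      1, 0, one_ne_zero, rfl⟩ ?_
    rintro n ⟨α, β, hα, rfl⟩
    by_contra hn
    push_neg at hn
    set D : Set (GaloisField 2 m) :=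
      {u : GaloisField 2 m | f.eval (u + α) + f.eval u = β} with hD
    have h5 : 5 ≤ D.ncard := hn
    -- extract three solutions in pairwise distinct α-pairs
    obtain ⟨x, hx⟩ : D.Nonempty := Set.nonempty_of_ncard_ne_zero (by omega)
    have h3 : 3 ≤ (D \ {x, x + α}).ncard := by
      have := ncard_le_diff_pair x (x + α) D; omega
    obtain ⟨y, hy⟩ : (D \ {x, x + α}).Nonempty := Set.nonempty_of_ncard_ne_zero (by omega)
    have h1 : 1 ≤ ((D \ {x, x + α}) \ {y, y + α}).ncard := by
      have := ncard_le_diff_pair y (y + α) (D \ {x, x + α}); omega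
    obtain ⟨z, hz⟩ : ((D \ {x, x + α}) \ {y, y + α}).Nonempty :=
      Set.nonempty_of_ncard_ne_zero (by omega)
    obtain ⟨⟨hzD, hznx⟩, hzny⟩ := hz
    obtain ⟨hyD, hynx⟩ := hy
    simp only [Set.mem_insert_iff, Set.mem_singleton_iff, not_or] at hynx hznx hzny
    have hxD : f.eval (x + α) + f.eval x = β := hx
    have hyD' : f.eval (y + α) + f.eval y = β := hyD
    have hzD' : f.eval (z + α) + f.eval z = β := hzD
    -- nonzero differences
    have g1 : x + (x + α) ≠ 0 := fun h => hα (by linear_combination h - h2 * x)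
    have g2 : x + y ≠ 0 := fun h => hynx.1 (addeq x y h).symm
    have g3 : x + z ≠ 0 := fun h => hznx.1 (addeq x z h).symm
    have g4 : x + α + y ≠ 0 := fun h => hynx.2 (addeq (x + α) y h).symm
    have g5 : x + α + z ≠ 0 := fun h => hznx.2 (addeq (x + α) z h).symm
    have g6 : y + z ≠ 0 := fun h => hzny.1 (addeq y z h).symm
    have g7 : x + (x + α) + y + z ≠ 0 := fun h =>
      hzny.2 (by linear_combination -h + h2 * (x + z))
    -- the two points on the surface
    have hsum1 : f.eval x + f.eval (x + α) + f.eval y + f.eval (x + (x + α) + y) = 0 := by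
      have harg : x + (x + α) + y = y + α := by linear_combination h2 * x
      rw [harg]; linear_combination hxD + hyD' + h2 * β
    have hsum2 : f.eval x + f.eval (x + α) + f.eval z + f.eval (x + (x + α) + z) = 0 := by
      have harg : x + (x + α) + z = z + α := by linear_combination h2 * x
      rw [harg]; linear_combination hxD + hzD' + h2 * β
    have hP1 : MvPolynomial.eval ![x, x + α, y] P = 0 := by
      have hk := (key x (x + α) y).trans hsum1
      rcases mul_eq_zero.mp hk with h | h
      · exact absurd h (mul_ne_zero (mul_ne_zero g1 g2) g4)
      · exact h
    have hP2 : MvPolynomial.eval ![x, x + α, z] P = 0 := by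
      have hk := (key x (x + α) z).trans hsum2
      rcases mul_eq_zero.mp hk with h | h
      · exact absurd h (mul_ne_zero (mul_ne_zero g1 g3) g5)
      · exact h
    have hcontr := hgeo x (x + α) y z hP1 hP2
    exact (mul_ne_zero (mul_ne_zero (mul_ne_zero (mul_ne_zero (mul_ne_zero
      (mul_ne_zero g1 g2) g3) g4) g5) g6) g7) hcontr
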